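/- Fix an integer d ≥ 2, k ∈ [−π,π]^d, and a real number z with |z| < 1/(2d−1), and set μ_z = 2dz/(1 + (2d−1)z²). Then |μ_z·D̂(k)| < 1 and the non-backtracking walk generating function is proportional to the simple random walk Green's function: Σ_{n=0}^∞ b̂_n(k) z^n = [(1 − z²)/(1 + (2d−1)z²)] · 1/(1 − μ_z·D̂(k)). -/

import Mathlib

open scoped BigOperators
open Matrix

noncomputable section

/-- The index set `I = {-d, …, -1, 1, …, d}`. -/
def Idx (d : ℕ) : Finset ℤ := (Finset.Icc (-(d : ℤ)) d).erase 0

lemma mem_Idx {d : ℕ} {ι : ℤ} (h : ι ∈ Idx d) : ι ≠ 0 ∧ -(d : ℤ) ≤ ι ∧ ι ≤ d := by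
  simpa [Idx, Finset.mem_erase, Finset.mem_Icc, and_assoc] using h

lemma mem_Idx' {d : ℕ} {ι : ℤ} (h1 : ι ≠ 0) (h2 : -(d : ℤ) ≤ ι) (h3 : ι ≤ d) :
    ι ∈ Idx d := by
  simp [Idx, Finset.mem_erase, Finset.mem_Icc]; omega

/-- `k_ι = sign(ι) · k_{|ι|}` (with `|ι| ∈ {1,…,d}` re-indexed as `Fin d`). -/
def kc {d : ℕ} (k : Fin d → ℝ) (ι : Idx d) : ℝ :=
  (ι.1.sign : ℝ) * k ⟨ι.1.natAbs - 1, by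
    obtain ⟨h1, h2, h3⟩ := mem_Idx ι.2; omega⟩

/-- The negation `-ι` as an element of the index set. -/
def negIdx {d : ℕ} (ι : Idx d) : Idx d :=
  ⟨-ι.1, by obtain ⟨h1, h2, h3⟩ := mem_Idx ι.2; exact mem_Idx' (by omega) (by omega) (by omega)⟩

/-- The coordinate vector `e⃗_ι ∈ ℂ^I`. -/
def eVec {d : ℕ} (ι : Idx d) : Idx d → ℂ := fun κ => if κ = ι then 1 else 0

/-- The unit step `e_ι = sign(ι)·(basis vector |ι|)` in `ℤ^d`. -/
def stepVec {d : ℕ} (ι : Idx d) : Fin d → ℤ :=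
  fun j => if (j : ℕ) = ι.1.natAbs - 1 then ι.1.sign else 0

/-- The all-ones matrix `C`. -/
def matC (d : ℕ) : Matrix (Idx d) (Idx d) ℂ := Matrix.of fun _ _ => 1

/-- The matrix `J` with `J_{ι,κ} = δ_{ι,-κ}`. -/
def matJ (d : ℕ) : Matrix (Idx d) (Idx d) ℂ :=
  Matrix.of fun ι κ => if ι.1 = -κ.1 then 1 else 0

/-- The diagonal matrix `D[k]` with entries `e^{i k_ι}`. -/
def matD {d : ℕ} (k : Fin d → ℝ) : Matrix (Idx d) (Idx d) ℂ :=
  Matrix.diagonal fun ι => Complex.exp (Complex.I * (kc k ι : ℂ))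

/-- The NBW transition matrix `A[k] = (C − J)·D[−k]`. -/
def matA {d : ℕ} (k : Fin d → ℝ) : Matrix (Idx d) (Idx d) ℂ :=
  (matC d - matJ d) * matD (-k)

/-- `ω` is an `n`-step nearest-neighbour non-backtracking walk on `ℤ^d`. -/
def IsNBW (d n : ℕ) (ω : Fin (n + 1) → (Fin d → ℤ)) : Prop :=
  ω 0 = 0 ∧
  (∀ i : ℕ, ∀ hi : i < n,
    (∑ j, |ω ⟨i + 1, by omega⟩ j - ω ⟨i, by omega⟩ j|) = 1) ∧
  (∀ i : ℕ, ∀ hi : i + 2 ≤ n, ω ⟨i + 2, by omega⟩ ≠ ω ⟨i, by omega⟩)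

/-- `b_n(x)`: the number of `n`-step NBWs ending at `x`. -/
def bc (d n : ℕ) (x : Fin d → ℤ) : ℕ :=
  Nat.card {ω : Fin (n + 1) → (Fin d → ℤ) // IsNBW d n ω ∧ ω (Fin.last n) = x}

/-- `b_n^ι(x)`: the number of `n`-step NBWs ending at `x` whose first step is not `e_ι`. -/
def bcRes (d n : ℕ) (ι : Idx d) (x : Fin d → ℤ) : ℕ :=
  Nat.card {ω : Fin (n + 1) → (Fin d → ℤ) //
    IsNBW d n ω ∧ ω (Fin.last n) = x ∧ ∀ _ : 1 ≤ n, ω ⟨1, by omega⟩ ≠ stepVec ι}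

/-- Fourier transform `f̂(k) = Σ_x f(x) e^{i k·x}` of a (finitely supported) `f : ℤ^d → ℕ`. -/
def fhat {d : ℕ} (f : (Fin d → ℤ) → ℕ) (k : Fin d → ℝ) : ℂ :=
  ∑' x : Fin d → ℤ, (f x : ℂ) * Complex.exp (Complex.I * ∑ j, (k j : ℂ) * (x j : ℂ))

/-- `b̂_n(k)`. -/
def bhat (d n : ℕ) (k : Fin d → ℝ) : ℂ := fhat (bc d n) k

/-- `b⃗_n(k)`, the vector with entries `b̂_n^ι(k)`. -/
def bvec (d n : ℕ) (k : Fin d → ℝ) : Idx d → ℂ := fun ι => fhat (bcRes d n ι) k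

/-- `D̂(k) = (1/d) Σ_j cos k_j`. -/
def Dhat {d : ℕ} (k : Fin d → ℝ) : ℝ := (1 / d) * ∑ j, Real.cos (k j)

namespace NBWproof

variable {d : ℕ}

lemma idx_bounds (ι : Idx d) : 1 ≤ ι.1.natAbs ∧ ι.1.natAbs ≤ d := by
  obtain ⟨h1, h2, h3⟩ := mem_Idx ι.2; omega

lemma negIdx_negIdx (ι : Idx d) : negIdx (negIdx ι) = ι := by
  apply Subtype.ext; simp [negIdx]

lemma negIdx_ne (ι κ : Idx d) : ι ≠ negIdx κ ↔ κ ≠ negIdx ι := by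
  constructor <;>
    (intro h he; apply h; apply Subtype.ext
     have hv := congrArg Subtype.val he
     simp only [negIdx] at hv ⊢
     omega)

lemma sign_abs (ι : Idx d) : |ι.1.sign| = 1 := by
  obtain ⟨h1, -, -⟩ := mem_Idx ι.2
  rcases lt_trichotomy ι.1 0 with h | h | h
  · simp [Int.sign_eq_neg_one_of_neg h]
  · exact absurd h h1
  · simp [Int.sign_eq_one_of_pos h]

lemma kc_negIdx (k : Fin d → ℝ) (ι : Idx d) : kc k (negIdx ι) = - kc k ι := by
  unfold kc negIdx
  simp only [Int.sign_neg, Int.natAbs_neg, Int.cast_neg]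
  ring

lemma stepVec_negIdx (ι : Idx d) : stepVec (negIdx ι) = - stepVec ι := by
  funext j
  simp only [stepVec, negIdx, Int.sign_neg, Int.natAbs_neg, Pi.neg_apply]
  split <;> simp

lemma stepVec_injective : Function.Injective (stepVec (d := d)) := by
  intro ι κ h
  obtain ⟨hι1, hι2⟩ := idx_bounds ι
  obtain ⟨hκ1, hκ2⟩ := idx_bounds κ
  obtain ⟨hι0, -, -⟩ := mem_Idx ι.2
  obtain ⟨hκ0, -, -⟩ := mem_Idx κ.2
  have hj : (⟨ι.1.natAbs - 1, by omega⟩ : Fin d) = ⟨ι.1.natAbs - 1, by omega⟩ := rfl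
  have h1 := congrFun h ⟨ι.1.natAbs - 1, by omega⟩
  simp only [stepVec] at h1
  rw [if_pos trivial] at h1
  have hsign : ι.1.sign ≠ 0 := by simpa [Int.sign_eq_zero_iff_zero] using hι0
  by_cases hc : (ι.1.natAbs - 1 : ℕ) = κ.1.natAbs - 1
  · rw [if_pos hc] at h1
    apply Subtype.ext
    have hna : ι.1.natAbs = κ.1.natAbs := by omega
    rcases Int.natAbs_eq_natAbs_iff.mp hna with he | he
    · exact he
    · exfalso
      rw [he] at h1
      rw [Int.sign_neg] at h1
      have : κ.1.sign = 0 := by omega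
      rw [Int.sign_eq_zero_iff_zero] at this
      exact hκ0 this
  · rw [if_neg hc] at h1; exact absurd h1 hsign

lemma stepVec_l1 (ι : Idx d) : (∑ j, |stepVec ι j|) = 1 := by
  obtain ⟨h1, h2⟩ := idx_bounds ι
  have key : ∀ j : Fin d, |stepVec ι j| = if j = (⟨ι.1.natAbs - 1, by omega⟩ : Fin d) then 1 else 0 := by
    intro j
    simp only [stepVec]
    by_cases hc : (j : ℕ) = ι.1.natAbs - 1
    · rw [if_pos hc, if_pos (Fin.ext hc), sign_abs]
    · rw [if_neg hc, if_neg (fun he => hc (by rw [he]))]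
      simp
  rw [Finset.sum_congr rfl (fun j _ => key j), Finset.sum_ite_eq' Finset.univ]
  simp

lemma step_exists (v : Fin d → ℤ) (h : (∑ j, |v j|) = 1) : ∃ ι : Idx d, stepVec ι = v := by
  have hex : ∃ j, v j ≠ 0 := by
    by_contra hc
    push_neg at hc
    rw [Finset.sum_congr rfl (fun j _ => by rw [hc j, abs_zero])] at h
    simp at h
  obtain ⟨j₀, hj₀⟩ := hex
  have hsplit := Finset.add_sum_erase Finset.univ (fun j => |v j|) (Finset.mem_univ j₀)
  have hnn : ∀ j ∈ Finset.univ.erase j₀, 0 ≤ |v j| := fun j _ => abs_nonneg _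
  have hrest : (0:ℤ) ≤ ∑ j ∈ Finset.univ.erase j₀, |v j| := Finset.sum_nonneg hnn
  have hpos : (1:ℤ) ≤ |v j₀| := Int.one_le_abs hj₀
  have hs2 : |v j₀| + ∑ j ∈ Finset.univ.erase j₀, |v j| = 1 := by rw [hsplit]; exact h
  have h1 : |v j₀| = 1 ∧ ∑ j ∈ Finset.univ.erase j₀, |v j| = 0 := by omega
  have hzero : ∀ j, j ≠ j₀ → v j = 0 := by
    intro j hj
    have := (Finset.sum_eq_zero_iff_of_nonneg hnn).mp h1.2 j (Finset.mem_erase.mpr ⟨hj, Finset.mem_univ j⟩)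
    exact abs_eq_zero.mp this
  have hd1 : (j₀ : ℕ) < d := j₀.2
  rcases abs_eq (by norm_num : (0:ℤ) ≤ 1) |>.mp h1.1 with hv | hv
  · refine ⟨⟨((j₀ : ℕ) + 1 : ℕ), mem_Idx' (by omega) (by omega) (by omega)⟩, ?_⟩
    funext j
    simp only [stepVec]
    have hna : (((j₀ : ℕ) + 1 : ℕ) : ℤ).natAbs = (j₀ : ℕ) + 1 := Int.natAbs_natCast _
    rw [hna]
    have hsign : (((j₀ : ℕ) + 1 : ℕ) : ℤ).sign = 1 := Int.sign_eq_one_of_pos (by positivity)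
    rw [hsign]
    by_cases hc : (j : ℕ) = (j₀ : ℕ) + 1 - 1
    · have : j = j₀ := Fin.ext (by omega)
      rw [if_pos hc, this, hv]
    · rw [if_neg hc, hzero j (fun he => hc (by rw [he]; omega))]
  · refine ⟨⟨-(((j₀ : ℕ) + 1 : ℕ) : ℤ), mem_Idx' (by omega) (by omega) (by omega)⟩, ?_⟩
    funext j
    simp only [stepVec]
    have hna : (-(((j₀ : ℕ) + 1 : ℕ) : ℤ)).natAbs = (j₀ : ℕ) + 1 := by
      rw [Int.natAbs_neg]; exact Int.natAbs_natCast _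
    rw [hna]
    have hsign : (-(((j₀ : ℕ) + 1 : ℕ) : ℤ)).sign = -1 := by
      rw [Int.sign_neg, Int.sign_eq_one_of_pos (by positivity)]
    rw [hsign]
    by_cases hc : (j : ℕ) = (j₀ : ℕ) + 1 - 1
    · have : j = j₀ := Fin.ext (by omega)
      rw [if_pos hc, this, hv]
    · rw [if_neg hc, hzero j (fun he => hc (by rw [he]; omega))]

end NBWproof
open scoped Classical

namespace NBWproof
variable {d : ℕ}

/-- non-backtracking condition on a step sequence -/
def NB (n : ℕ) (s : Fin n → Idx d) : Prop :=
  ∀ i : ℕ, ∀ h : i + 1 < n, s ⟨i + 1, h⟩ ≠ negIdx (s ⟨i, by omega⟩)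

def wsum (n : ℕ) (s : Fin n → Idx d) : Fin d → ℤ := fun j => ∑ t, stepVec (s t) j

def walkOf (n : ℕ) (s : Fin n → Idx d) : Fin (n + 1) → Fin d → ℤ :=
  fun i j => ∑ t : Fin n, if (t : ℕ) < (i : ℕ) then stepVec (s t) j else 0

lemma sum_ite_val {n : ℕ} {M : Type*} [AddCommMonoid M] (i : ℕ) (h : i < n) (A : Fin n → M) :
    (∑ t : Fin n, if (t : ℕ) = i then A t else 0) = A ⟨i, h⟩ := by
  have key : ∀ t : Fin n, (if (t : ℕ) = i then A t else 0) = (if t = ⟨i, h⟩ then A t else 0) :=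
    fun t => if_congr ⟨fun hv => Fin.ext hv, fun hv => by rw [hv]⟩ rfl rfl
  rw [Finset.sum_congr rfl (fun t _ => key t)]
  simp [Finset.sum_ite_eq' Finset.univ]

lemma walkOf_zero (n : ℕ) (s : Fin n → Idx d) : walkOf n s 0 = 0 := by
  funext j
  simp [walkOf]

lemma walkOf_succ (n : ℕ) (s : Fin n → Idx d) (i : ℕ) (h : i < n) (j : Fin d) :
    walkOf n s ⟨i + 1, by omega⟩ j = walkOf n s ⟨i, by omega⟩ j + stepVec (s ⟨i, h⟩) j := by
  unfold walkOf
  have key : ∀ t : Fin n, (if (t : ℕ) < i + 1 then stepVec (s t) j else 0)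
      = (if (t : ℕ) < i then stepVec (s t) j else 0) + (if (t : ℕ) = i then stepVec (s t) j else 0) := by
    intro t
    by_cases h1 : (t : ℕ) < i
    · rw [if_pos (by omega), if_pos h1, if_neg (by omega), add_zero]
    · by_cases h2 : (t : ℕ) = i
      · rw [if_pos (by omega), if_neg h1, if_pos h2, zero_add]
      · rw [if_neg (by omega), if_neg h1, if_neg h2, add_zero]
  rw [Finset.sum_congr rfl (fun t _ => key t), Finset.sum_add_distrib, sum_ite_val i h]

lemma walkOf_last (n : ℕ) (s : Fin n → Idx d) : walkOf n s (Fin.last n) = wsum n s := by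
  funext j
  unfold walkOf wsum Fin.last
  exact Finset.sum_congr rfl (fun t _ => if_pos t.2)

lemma isNBW_walkOf (n : ℕ) (s : Fin n → Idx d) (hs : NB n s) : IsNBW d n (walkOf n s) := by
  refine ⟨walkOf_zero n s, ?_, ?_⟩
  · intro i hi
    have key : ∀ j, walkOf n s ⟨i + 1, by omega⟩ j - walkOf n s ⟨i, by omega⟩ j
        = stepVec (s ⟨i, hi⟩) j := by
      intro j; rw [walkOf_succ n s i hi j]; ring
    rw [Finset.sum_congr rfl (fun j _ => by rw [key j])]
    exact stepVec_l1 _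
  · intro i hi he
    have key : ∀ j, walkOf n s ⟨i + 2, by omega⟩ j
        = walkOf n s ⟨i, by omega⟩ j + stepVec (s ⟨i, by omega⟩) j + stepVec (s ⟨i + 1, by omega⟩) j := by
      intro j
      have e1 : walkOf n s ⟨i + 2, by omega⟩ j
          = walkOf n s ⟨i + 1, by omega⟩ j + stepVec (s ⟨i + 1, by omega⟩) j :=
        walkOf_succ n s (i + 1) (by omega) j
      rw [e1, walkOf_succ n s i (by omega) j]
    have hv : stepVec (s ⟨i + 1, by omega⟩) = - stepVec (s ⟨i, by omega⟩) := by
      funext j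
      have := congrFun he j
      rw [key j] at this
      simp only [Pi.neg_apply]
      omega
    rw [← stepVec_negIdx] at hv
    exact hs i (by omega) (stepVec_injective hv)

lemma walkOf_eq_of_steps {n : ℕ} (s : Fin n → Idx d) (ω : Fin (n + 1) → Fin d → ℤ)
    (h0 : ω 0 = 0)
    (hstp : ∀ i : ℕ, ∀ h : i < n, ∀ j,
      stepVec (s ⟨i, h⟩) j = ω ⟨i + 1, by omega⟩ j - ω ⟨i, by omega⟩ j) :
    walkOf n s = ω := by
  have main : ∀ m : ℕ, ∀ hm : m < n + 1, walkOf n s ⟨m, hm⟩ = ω ⟨m, hm⟩ := by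
    intro m
    induction m with
    | zero =>
      intro hm
      have h00 : (⟨0, hm⟩ : Fin (n + 1)) = 0 := by simp [Fin.ext_iff]
      rw [h00, walkOf_zero, h0]
    | succ m ih =>
      intro hm
      have hmn : m < n := by omega
      funext j
      rw [walkOf_succ n s m hmn j, congrFun (ih (by omega)) j, hstp m hmn j]
      ring
  funext i
  have : i = ⟨(i : ℕ), i.2⟩ := rfl
  rw [this, main (i : ℕ) i.2]

lemma exists_seq_of_NBW {n : ℕ} (ω : Fin (n + 1) → Fin d → ℤ) (hω : IsNBW d n ω) :
    ∃ s : Fin n → Idx d, NB n s ∧ walkOf n s = ω := by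
  obtain ⟨h0, hstep, hnb⟩ := hω
  have hch : ∀ i : Fin n, ∃ ι : Idx d, stepVec ι
      = fun j => ω ⟨(i : ℕ) + 1, by omega⟩ j - ω ⟨(i : ℕ), by omega⟩ j := by
    intro i
    exact step_exists _ (hstep (i : ℕ) i.2)
  choose s hsv using hch
  have hstp : ∀ i : ℕ, ∀ h : i < n, ∀ j,
      stepVec (s ⟨i, h⟩) j = ω ⟨i + 1, by omega⟩ j - ω ⟨i, by omega⟩ j := by
    intro i h j
    exact congrFun (hsv ⟨i, h⟩) j
  have hwalk : walkOf n s = ω := walkOf_eq_of_steps s ω h0 hstp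
  refine ⟨s, ?_, hwalk⟩
  intro i h he
  apply hnb i (by omega)
  show ω ⟨i + 1 + 1, by omega⟩ = ω ⟨i, by omega⟩
  funext j
  have e1 := hstp (i + 1) h j
  have e2 := hstp i (by omega) j
  rw [he, stepVec_negIdx] at e1
  simp only [Pi.neg_apply] at e1
  rw [e2] at e1
  omega

lemma bc_eq (n : ℕ) (x : Fin d → ℤ) :
    bc d n x = ((Finset.univ : Finset (Fin n → Idx d)).filter
      (fun s => NB n s ∧ wsum n s = x)).card := by
  have hbij : Function.Bijective
      (fun s : {s : Fin n → Idx d // NB n s ∧ wsum n s = x} =>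
        (⟨walkOf n s.1, isNBW_walkOf n s.1 s.2.1,
          by rw [walkOf_last]; exact s.2.2⟩ :
          {ω : Fin (n + 1) → Fin d → ℤ // IsNBW d n ω ∧ ω (Fin.last n) = x})) := by
    constructor
    · intro s s' hss
      have hw : walkOf n s.1 = walkOf n s'.1 := congrArg Subtype.val hss
      apply Subtype.ext
      funext i
      apply stepVec_injective
      funext j
      have e1 : stepVec (s.1 i) j = walkOf n s.1 ⟨(i : ℕ) + 1, by omega⟩ j
          - walkOf n s.1 ⟨(i : ℕ), by omega⟩ j := by
        rw [walkOf_succ n s.1 (i : ℕ) i.2 j]; ring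
      have e2 : stepVec (s'.1 i) j = walkOf n s'.1 ⟨(i : ℕ) + 1, by omega⟩ j
          - walkOf n s'.1 ⟨(i : ℕ), by omega⟩ j := by
        rw [walkOf_succ n s'.1 (i : ℕ) i.2 j]; ring
      rw [e1, e2, hw]
    · intro ω
      obtain ⟨s, hnb, hwalk⟩ := exists_seq_of_NBW ω.1 ω.2.1
      refine ⟨⟨s, hnb, ?_⟩, ?_⟩
      · rw [← walkOf_last, hwalk]; exact ω.2.2
      · exact Subtype.ext hwalk
  rw [bc, ← Nat.card_eq_of_bijective _ hbij, Nat.card_eq_fintype_card, Fintype.card_subtype]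

end NBWproof
namespace NBWproof
variable {d : ℕ}

def phase (k : Fin d → ℝ) (ι : Idx d) : ℂ := Complex.exp (Complex.I * (kc k ι : ℂ))

def aseq (d : ℕ) (k : Fin d → ℝ) (n : ℕ) : ℂ :=
  ∑ s ∈ (Finset.univ : Finset (Fin n → Idx d)).filter (NB n), ∏ i, phase k (s i)

lemma dot_step (k : Fin d → ℝ) (ι : Idx d) :
    (∑ j, (k j : ℂ) * ((stepVec ι j : ℤ) : ℂ)) = (kc k ι : ℂ) := by
  obtain ⟨h1, h2⟩ := idx_bounds ι
  have key : ∀ j : Fin d, (k j : ℂ) * ((stepVec ι j : ℤ) : ℂ)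
      = if (j : ℕ) = ι.1.natAbs - 1 then (k j : ℂ) * (ι.1.sign : ℂ) else 0 := by
    intro j
    simp only [stepVec]
    split <;> simp
  rw [Finset.sum_congr rfl (fun j _ => key j), sum_ite_val (ι.1.natAbs - 1) (by omega)]
  simp only [kc]
  push_cast
  ring

lemma dot_wsum (k : Fin d → ℝ) (n : ℕ) (s : Fin n → Idx d) :
    (∑ j, (k j : ℂ) * ((wsum n s j : ℤ) : ℂ)) = ∑ i, (kc k (s i) : ℂ) := by
  have expand : ∀ j, ((wsum n s j : ℤ) : ℂ) = ∑ t, ((stepVec (s t) j : ℤ) : ℂ) := by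
    intro j; rw [wsum]; push_cast; ring
  calc (∑ j, (k j : ℂ) * ((wsum n s j : ℤ) : ℂ))
      = ∑ j, ∑ t, (k j : ℂ) * ((stepVec (s t) j : ℤ) : ℂ) := by
        exact Finset.sum_congr rfl (fun j _ => by rw [expand j, Finset.mul_sum])
    _ = ∑ t, ∑ j, (k j : ℂ) * ((stepVec (s t) j : ℤ) : ℂ) := Finset.sum_comm
    _ = ∑ t, (kc k (s t) : ℂ) := Finset.sum_congr rfl (fun t _ => dot_step k (s t))

lemma prod_phase (k : Fin d → ℝ) (n : ℕ) (s : Fin n → Idx d) :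
    (∏ i, phase k (s i)) = Complex.exp (Complex.I * ∑ j, (k j : ℂ) * ((wsum n s j : ℤ) : ℂ)) := by
  simp only [phase]
  rw [dot_wsum, Finset.mul_sum, ← Complex.exp_sum]

lemma bhat_eq (k : Fin d → ℝ) (n : ℕ) : bhat d n k = aseq d k n := by
  classical
  set T := ((Finset.univ : Finset (Fin n → Idx d)).filter (NB n)).image (wsum n) with hT
  have hzero : ∀ x ∉ T,
      ((bc d n x : ℂ)) * Complex.exp (Complex.I * ∑ j, (k j : ℂ) * ((x j : ℤ) : ℂ)) = 0 := by
    intro x hx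
    have hbc : bc d n x = 0 := by
      rw [bc_eq]
      rw [Finset.card_eq_zero, Finset.filter_eq_empty_iff]
      intro s _ hs
      exact hx (Finset.mem_image.mpr ⟨s, Finset.mem_filter.mpr ⟨Finset.mem_univ s, hs.1⟩, hs.2⟩)
    rw [hbc]
    simp
  rw [bhat, fhat, tsum_eq_sum hzero]
  have hfib : ∀ x ∈ T,
      ((bc d n x : ℂ)) * Complex.exp (Complex.I * ∑ j, (k j : ℂ) * ((x j : ℤ) : ℂ))
      = ∑ s ∈ ((Finset.univ : Finset (Fin n → Idx d)).filter (NB n)).filter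
          (fun s => wsum n s = x), ∏ i, phase k (s i) := by
    intro x _
    have hsummand : ∀ s ∈ ((Finset.univ : Finset (Fin n → Idx d)).filter (NB n)).filter
        (fun s => wsum n s = x), (∏ i, phase k (s i))
        = Complex.exp (Complex.I * ∑ j, (k j : ℂ) * ((x j : ℤ) : ℂ)) := by
      intro s hs
      have hws : wsum n s = x := (Finset.mem_filter.mp hs).2
      rw [prod_phase, hws]
    rw [Finset.sum_congr rfl hsummand, Finset.sum_const, nsmul_eq_mul, bc_eq]
    congr 2
    rw [Finset.filter_filter]
  rw [Finset.sum_congr rfl hfib]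
  rw [Finset.sum_fiberwise_of_maps_to (fun s hs => Finset.mem_image.mpr
    ⟨s, hs, rfl⟩)]
  rfl

end NBWproof
namespace NBWproof
variable {d : ℕ}

def Tseq (d : ℕ) (k : Fin d → ℝ) (m : ℕ) (ι : Idx d) : ℂ :=
  ∑ s ∈ (Finset.univ : Finset (Fin (m + 1) → Idx d)).filter
      (fun s => NB (m + 1) s ∧ s 0 = ι), ∏ i, phase k (s i)

lemma aseq_ite (k : Fin d → ℝ) (n : ℕ) :
    aseq d k n = ∑ s : Fin n → Idx d, if NB n s then ∏ i, phase k (s i) else 0 :=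
  Finset.sum_filter _ _

lemma Tseq_ite (k : Fin d → ℝ) (m : ℕ) (ι : Idx d) :
    Tseq d k m ι = ∑ s : Fin (m + 1) → Idx d,
      if NB (m + 1) s ∧ s 0 = ι then ∏ i, phase k (s i) else 0 :=
  Finset.sum_filter _ _

lemma aseq_zero (k : Fin d → ℝ) : aseq d k 0 = 1 := by
  rw [aseq_ite]
  have hNB : ∀ s : Fin 0 → Idx d, NB 0 s := fun s i h => absurd h (by omega)
  have h1 : ∀ s : Fin 0 → Idx d,
      (if NB 0 s then ∏ i, phase k (s i) else 0) = 1 := by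
    intro s
    rw [if_pos (hNB s)]
    exact Finset.prod_of_isEmpty _
  rw [Finset.sum_congr rfl (fun s _ => h1 s)]
  simp

lemma aseq_succ (k : Fin d → ℝ) (m : ℕ) :
    aseq d k (m + 1) = ∑ ι, Tseq d k m ι := by
  unfold aseq Tseq
  have key := Finset.sum_fiberwise_of_maps_to
    (g := fun s : Fin (m + 1) → Idx d => s 0)
    (s := (Finset.univ : Finset (Fin (m + 1) → Idx d)).filter (NB (m + 1)))
    (t := Finset.univ)
    (fun s _ => Finset.mem_univ (s 0)) (fun s => ∏ i, phase k (s i))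
  rw [← key]
  apply Finset.sum_congr rfl
  intro ι _
  congr 1
  rw [Finset.filter_filter]

lemma Tseq_zero (k : Fin d → ℝ) (ι : Idx d) : Tseq d k 0 ι = phase k ι := by
  rw [Tseq_ite]
  have hNB : ∀ s : Fin 1 → Idx d, NB 1 s := fun s i h => absurd h (by omega)
  rw [Finset.sum_eq_single (fun _ => ι)]
  · rw [if_pos ⟨hNB _, rfl⟩, Fin.prod_univ_one]
  · intro s _ hs
    rw [if_neg]
    rintro ⟨-, h0⟩
    apply hs
    funext i
    have : i = 0 := Fin.ext (by omega)
    rw [this, h0]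
  · intro h
    exact absurd (Finset.mem_univ _) h

def consF {m : ℕ} (ι : Idx d) (s : Fin (m + 1) → Idx d) : Fin (m + 2) → Idx d :=
  Fin.cons ι s

lemma cons_succ_mk {m : ℕ} (ι : Idx d) (s : Fin (m + 1) → Idx d) (i : ℕ) (h : i < m + 1) :
    consF ι s ⟨i + 1, by omega⟩ = s ⟨i, h⟩ := by
  exact Fin.cons_succ (α := fun _ => Idx d) ι s ⟨i, h⟩

lemma cons_zero_mk {m : ℕ} (ι : Idx d) (s : Fin (m + 1) → Idx d) (h : 0 < m + 2) :
    consF ι s ⟨0, h⟩ = ι := by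
  exact Fin.cons_zero (α := fun _ => Idx d) ι s

lemma NB_cons {m : ℕ} (ι : Idx d) (s : Fin (m + 1) → Idx d) :
    NB (m + 2) (consF ι s) ↔ NB (m + 1) s ∧ s 0 ≠ negIdx ι := by
  constructor
  · intro h
    refine ⟨?_, ?_⟩
    · intro i hi
      have h2 := h (i + 1) (by omega)
      rwa [cons_succ_mk ι s (i + 1) (by omega), cons_succ_mk ι s i (by omega)] at h2
    · intro he
      have h2 := h 0 (by omega)
      rw [cons_succ_mk ι s 0 (by omega), cons_zero_mk] at h2
      exact h2 he
  · rintro ⟨h1, h2⟩ i hi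
    cases i with
    | zero =>
      rw [cons_succ_mk ι s 0 (by omega), cons_zero_mk]
      exact h2
    | succ i =>
      rw [cons_succ_mk ι s (i + 1) (by omega), cons_succ_mk ι s i (by omega)]
      exact h1 i (by omega)

lemma prod_cons (k : Fin d → ℝ) {m : ℕ} (ι : Idx d) (s : Fin (m + 1) → Idx d) :
    (∏ i, phase k (consF ι s i)) = phase k ι * ∏ i, phase k (s i) := by
  rw [Fin.prod_univ_succ]
  simp [consF, Fin.cons_succ, Fin.cons_zero]

lemma Tseq_succ (k : Fin d → ℝ) (m : ℕ) (ι : Idx d) :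
    Tseq d k (m + 1) ι = phase k ι * (aseq d k (m + 1) - Tseq d k m (negIdx ι)) := by
  rw [Tseq_ite]
  have hre := Fintype.sum_equiv (Fin.consEquiv (fun _ : Fin (m + 2) => Idx d))
    (fun p : Idx d × (Fin (m + 1) → Idx d) =>
      if NB (m + 2) (consF p.1 p.2) ∧ p.1 = ι then phase k p.1 * ∏ i, phase k (p.2 i) else 0)
    (fun t : Fin (m + 2) → Idx d =>
      if NB (m + 2) t ∧ t 0 = ι then ∏ i, phase k (t i) else 0)
    (by
      intro p
      show (if NB (m + 2) (consF p.1 p.2) ∧ p.1 = ι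
          then phase k p.1 * ∏ i, phase k (p.2 i) else 0)
        = (if NB (m + 2) (consF p.1 p.2) ∧ consF p.1 p.2 0 = ι
          then ∏ i, phase k (consF p.1 p.2 i) else 0)
      rw [prod_cons,
        show consF p.1 p.2 0 = p.1 from Fin.cons_zero (α := fun _ => Idx d) p.1 p.2])
  rw [← hre, Fintype.sum_prod_type, Finset.sum_comm]
  have inner : ∀ s : Fin (m + 1) → Idx d,
      (∑ κ : Idx d, if NB (m + 2) (consF κ s) ∧ κ = ι
        then phase k κ * ∏ i, phase k (s i) else 0)
      = if NB (m + 1) s ∧ s 0 ≠ negIdx ι then phase k ι * ∏ i, phase k (s i) else 0 := by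
    intro s
    have step : ∀ κ : Idx d, (if NB (m + 2) (consF κ s) ∧ κ = ι
        then phase k κ * ∏ i, phase k (s i) else 0)
        = if κ = ι then (if NB (m + 1) s ∧ s 0 ≠ negIdx ι
            then phase k ι * ∏ i, phase k (s i) else 0) else 0 := by
      intro κ
      by_cases hκ : κ = ι
      · subst hκ
        rw [if_pos rfl]
        exact if_congr (by rw [NB_cons]; tauto) rfl rfl
      · rw [if_neg hκ, if_neg (fun hc => hκ hc.2)]
    rw [Finset.sum_congr rfl (fun κ _ => step κ), Finset.sum_ite_eq' Finset.univ]
    simp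
  rw [Finset.sum_congr rfl (fun s _ => inner s)]
  have split : ∀ s : Fin (m + 1) → Idx d,
      (if NB (m + 1) s ∧ s 0 ≠ negIdx ι then phase k ι * ∏ i, phase k (s i) else 0)
      = phase k ι * ((if NB (m + 1) s then ∏ i, phase k (s i) else 0)
          - (if NB (m + 1) s ∧ s 0 = negIdx ι then ∏ i, phase k (s i) else 0)) := by
    intro s
    by_cases h1 : NB (m + 1) s
    · by_cases h2 : s 0 = negIdx ι
      · rw [if_neg (fun hc => hc.2 h2), if_pos h1, if_pos ⟨h1, h2⟩]; ring
      · rw [if_pos ⟨h1, h2⟩, if_pos h1, if_neg (fun hc => h2 hc.2)]; ring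
    · rw [if_neg (fun hc => h1 hc.1), if_neg h1, if_neg (fun hc => h1 hc.1)]; ring
  rw [Finset.sum_congr rfl (fun s _ => split s), ← Finset.mul_sum,
    Finset.sum_sub_distrib, ← aseq_ite, ← Tseq_ite]

end NBWproof
namespace NBWproof
variable {d : ℕ}

lemma negIdx_invol : Function.Involutive (negIdx (d := d)) := negIdx_negIdx

lemma phase_mul_neg (k : Fin d → ℝ) (ι : Idx d) :
    phase k ι * phase k (negIdx ι) = 1 := by
  rw [phase, phase, ← Complex.exp_add, kc_negIdx]
  rw [show Complex.I * ((kc k ι : ℝ) : ℂ) + Complex.I * ((-(kc k ι) : ℝ) : ℂ) = 0 by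
    push_cast; ring]
  exact Complex.exp_zero

lemma norm_phase (k : Fin d → ℝ) (ι : Idx d) : ‖phase k ι‖ = 1 := by
  rw [phase, show Complex.I * ((kc k ι : ℝ) : ℂ) = ((kc k ι : ℝ) : ℂ) * Complex.I from
    mul_comm _ _, Complex.norm_exp_ofReal_mul_I]

lemma card_Idx : (Idx d).card = 2 * d := by
  rw [Idx, Finset.card_erase_of_mem (Finset.mem_Icc.mpr ⟨by omega, by omega⟩), Int.card_Icc]
  omega

lemma card_IdxT : Fintype.card (Idx d : Finset ℤ) = 2 * d := by
  rw [Fintype.card_coe, card_Idx]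

lemma sum_Tneg (k : Fin d → ℝ) (m : ℕ) :
    (∑ ι, Tseq d k m (negIdx ι)) = ∑ ι, Tseq d k m ι :=
  Equiv.sum_comp (negIdx_invol.toPerm) (Tseq d k m)

lemma aseq_one (k : Fin d → ℝ) : aseq d k 1 = ∑ ι, phase k ι := by
  have h := aseq_succ k 0
  rw [h]
  exact Finset.sum_congr rfl (fun ι _ => Tseq_zero k ι)

lemma aseq_two (k : Fin d → ℝ) :
    aseq d k 2 = (∑ ι, phase k ι) * aseq d k 1 - 2 * (d : ℂ) := by
  have h := aseq_succ k 1
  rw [show (2 : ℕ) = 1 + 1 from rfl, h,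
    Finset.sum_congr rfl (fun ι _ => Tseq_succ k 0 ι),
    Finset.sum_congr rfl (fun ι (_ : ι ∈ Finset.univ) => by
      rw [Tseq_zero k (negIdx ι), mul_sub, phase_mul_neg k ι]),
    Finset.sum_sub_distrib, ← Finset.sum_mul, Finset.sum_const, Finset.card_univ, card_IdxT]
  push_cast
  ring

lemma sum_phase_Tneg (k : Fin d → ℝ) (m : ℕ) :
    (∑ ι, phase k ι * Tseq d k (m + 1) (negIdx ι))
      = (2 * (d : ℂ) - 1) * aseq d k (m + 1) := by
  have hre : (∑ ι, phase k ι * Tseq d k (m + 1) (negIdx ι))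
      = ∑ ι, phase k (negIdx ι) * Tseq d k (m + 1) ι := by
    rw [Finset.sum_congr rfl (fun ι (_ : ι ∈ Finset.univ) => by
      rw [show phase k ι = phase k (negIdx (negIdx ι)) by rw [negIdx_negIdx]])]
    exact Equiv.sum_comp (negIdx_invol.toPerm)
      (fun κ => phase k (negIdx κ) * Tseq d k (m + 1) κ)
  rw [hre, Finset.sum_congr rfl (fun ι (_ : ι ∈ Finset.univ) => by
    rw [Tseq_succ k m ι, ← mul_assoc, mul_comm (phase k (negIdx ι)) (phase k ι),
      phase_mul_neg k ι, one_mul])]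
  rw [Finset.sum_sub_distrib, sum_Tneg, ← aseq_succ, Finset.sum_const, Finset.card_univ,
    card_IdxT]
  push_cast
  ring

lemma aseq_rec (k : Fin d → ℝ) (m : ℕ) :
    aseq d k (m + 3) = (∑ ι, phase k ι) * aseq d k (m + 2)
      - (2 * (d : ℂ) - 1) * aseq d k (m + 1) := by
  have h1 : aseq d k (m + 3) = ∑ ι, Tseq d k (m + 2) ι := aseq_succ k (m + 2)
  rw [h1, Finset.sum_congr rfl (fun ι (_ : ι ∈ Finset.univ) => by
    rw [show Tseq d k (m + 2) ι
        = phase k ι * (aseq d k (m + 2) - Tseq d k (m + 1) (negIdx ι)) from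
      Tseq_succ k (m + 1) ι, mul_sub])]
  rw [Finset.sum_sub_distrib, ← Finset.sum_mul, sum_phase_Tneg k m]

lemma Tseq_bound (k : Fin d → ℝ) (m : ℕ) (ι : Idx d) :
    ‖Tseq d k m ι‖ ≤ (2 * (d : ℝ) - 1) ^ m := by
  induction m generalizing ι with
  | zero =>
    rw [Tseq_zero, norm_phase]
    norm_num
  | succ m ih =>
    rw [Tseq_succ, norm_mul, norm_phase, one_mul]
    have hsplit : aseq d k (m + 1) - Tseq d k m (negIdx ι)
        = ∑ κ ∈ Finset.univ.erase (negIdx ι), Tseq d k m κ := by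
      rw [aseq_succ, ← Finset.add_sum_erase Finset.univ (Tseq d k m)
        (Finset.mem_univ (negIdx ι))]
      ring
    rw [hsplit]
    calc ‖∑ κ ∈ Finset.univ.erase (negIdx ι), Tseq d k m κ‖
        ≤ ∑ κ ∈ Finset.univ.erase (negIdx ι), ‖Tseq d k m κ‖ := norm_sum_le _ _
      _ ≤ ∑ κ ∈ Finset.univ.erase (negIdx ι), (2 * (d : ℝ) - 1) ^ m :=
          Finset.sum_le_sum (fun κ _ => ih κ)
      _ = ((Finset.univ.erase (negIdx ι)).card : ℝ) * (2 * (d : ℝ) - 1) ^ m := by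
          rw [Finset.sum_const, nsmul_eq_mul]
      _ = (2 * (d : ℝ) - 1) ^ (m + 1) := by
          rw [Finset.card_erase_of_mem (Finset.mem_univ _), Finset.card_univ, card_IdxT]
          have hd1 : 1 ≤ d := by
            obtain ⟨ha, hb⟩ := idx_bounds ι; omega
          rw [Nat.cast_sub (by omega : 1 ≤ 2 * d), pow_succ]
          push_cast
          ring

lemma aseq_bound (k : Fin d → ℝ) (hd : 1 ≤ d) (n : ℕ) :
    ‖aseq d k n‖ ≤ 2 * (d : ℝ) * (2 * (d : ℝ) - 1) ^ n := by
  have hd1 : (1 : ℝ) ≤ (d : ℝ) := by exact_mod_cast hd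
  have hb1 : (1 : ℝ) ≤ 2 * (d : ℝ) - 1 := by linarith
  cases n with
  | zero =>
    rw [aseq_zero, pow_zero, norm_one]
    linarith
  | succ m =>
    rw [aseq_succ]
    calc ‖∑ ι, Tseq d k m ι‖
        ≤ ∑ ι, ‖Tseq d k m ι‖ := norm_sum_le _ _
      _ ≤ ∑ _ι : (Idx d : Finset ℤ), (2 * (d : ℝ) - 1) ^ m :=
          Finset.sum_le_sum (fun ι _ => Tseq_bound k m ι)
      _ = 2 * (d : ℝ) * (2 * (d : ℝ) - 1) ^ m := by
          rw [Finset.sum_const, Finset.card_univ, card_IdxT, nsmul_eq_mul]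
          push_cast
          ring
      _ ≤ 2 * (d : ℝ) * (2 * (d : ℝ) - 1) ^ (m + 1) := by
          have hpow := pow_le_pow_right₀ hb1 (Nat.le_succ m)
          have hpos : (0 : ℝ) ≤ 2 * (d : ℝ) := by linarith
          exact mul_le_mul_of_nonneg_left hpow hpos

end NBWproof
namespace NBWproof
variable {d : ℕ}

def posIdx (d : ℕ) (j : Fin d) : Idx d :=
  ⟨((j : ℕ) : ℤ) + 1, mem_Idx' (by omega) (by omega) (by have := j.2; omega)⟩

lemma kc_posIdx (k : Fin d → ℝ) (j : Fin d) : kc k (posIdx d j) = k j := by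
  have hfin : ∀ h : ((((j : ℕ) : ℤ) + 1).natAbs - 1) < d,
      (⟨(((j : ℕ) : ℤ) + 1).natAbs - 1, h⟩ : Fin d) = j := fun h => Fin.ext (by
    show (((j : ℕ) : ℤ) + 1).natAbs - 1 = (j : ℕ)
    omega)
  simp only [kc, posIdx]
  rw [hfin, Int.sign_eq_one_of_pos (by omega)]
  simp

def signedIdx (d : ℕ) : Bool × Fin d ≃ (Idx d : Finset ℤ) where
  toFun p := if p.1 then posIdx d p.2 else negIdx (posIdx d p.2)
  invFun ι := (decide (0 < ι.1), ⟨ι.1.natAbs - 1, by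
    obtain ⟨h1, h2⟩ := idx_bounds ι; omega⟩)
  left_inv p := by
    obtain ⟨b, j⟩ := p
    cases b
    · simp only [Bool.false_eq_true, if_false, negIdx, posIdx]
      refine Prod.ext ?_ (Fin.ext ?_)
      · simp only [decide_eq_false_iff_not]
        omega
      · simp only []
        omega
    · simp only [if_true, posIdx]
      refine Prod.ext ?_ (Fin.ext ?_)
      · simp only [decide_eq_true_eq]
        omega
      · simp only []
        omega
  right_inv ι := by
    obtain ⟨h0, hl, hr⟩ := mem_Idx ι.2
    dsimp only
    by_cases h : 0 < ι.1
    · rw [if_pos (decide_eq_true h)]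
      apply Subtype.ext
      simp only [posIdx]
      omega
    · rw [if_neg (by simpa using h)]
      apply Subtype.ext
      simp only [negIdx, posIdx]
      omega

lemma exp_pair (x : ℝ) :
    Complex.exp (Complex.I * (x : ℂ)) + Complex.exp (Complex.I * ((-x : ℝ) : ℂ))
      = 2 * ((Real.cos x : ℝ) : ℂ) := by
  rw [mul_comm Complex.I ((x : ℝ) : ℂ), Complex.exp_mul_I,
    mul_comm Complex.I (((-x : ℝ) : ℝ) : ℂ), Complex.exp_mul_I]
  push_cast
  rw [Complex.cos_neg, Complex.sin_neg, ← Complex.ofReal_cos]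
  push_cast
  ring

lemma sum_phase (k : Fin d → ℝ) :
    (∑ ι, phase k ι) = 2 * ((∑ j, Real.cos (k j) : ℝ) : ℂ) := by
  rw [← Equiv.sum_comp (signedIdx d) (phase k), Fintype.sum_prod_type, Fintype.sum_bool]
  have htrue : ∀ j : Fin d, signedIdx d (true, j) = posIdx d j := fun j => rfl
  have hfalse : ∀ j : Fin d, signedIdx d (false, j) = negIdx (posIdx d j) := fun j => rfl
  have hsum : ∀ j : Fin d, phase k (signedIdx d (true, j)) + phase k (signedIdx d (false, j))
      = 2 * ((Real.cos (k j) : ℝ) : ℂ) := by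
    intro j
    rw [htrue, hfalse, phase, phase, kc_negIdx, kc_posIdx]
    exact exp_pair (k j)
  rw [← Finset.sum_add_distrib, Finset.sum_congr rfl (fun j _ => hsum j)]
  push_cast
  rw [Finset.mul_sum]

end NBWproof
open NBWproof in
/-- with `μ_z = 2dz/(1+(2d−1)z²)` one has `|μ_z·D̂(k)| < 1` and
`Σ_n b̂_n(k) zⁿ = [(1−z²)/(1+(2d−1)z²)] · 1/(1 − μ_z·D̂(k))`. -/
theorem nbw_green_vs_srw_green (d : ℕ) (hd : 2 ≤ d) (k : Fin d → ℝ)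
    (hk : ∀ j, k j ∈ Set.Icc (-Real.pi) Real.pi) (z : ℝ)
    (hz : |z| < 1 / (2 * d - 1)) :
    |(2 * d * z / (1 + (2 * d - 1) * z ^ 2)) * Dhat k| < 1 ∧
    HasSum (fun n : ℕ => bhat d n k * (z : ℂ) ^ n)
      (((1 - z ^ 2) / (1 + (2 * d - 1) * z ^ 2) : ℝ) *
        (1 / (1 - ((2 * d * z / (1 + (2 * d - 1) * z ^ 2)) * Dhat k : ℝ)))) := by
  have hd1 : 1 ≤ d := by omega
  have hdR : (2 : ℝ) ≤ (d : ℝ) := by exact_mod_cast hd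
  have h2d1 : (0 : ℝ) < 2 * (d : ℝ) - 1 := by linarith
  have habs0 : (0 : ℝ) ≤ |z| := abs_nonneg z
  have hz1 : (2 * (d : ℝ) - 1) * |z| < 1 := by
    rw [lt_div_iff₀ h2d1] at hz
    linarith
  have hzlt1 : |z| < 1 := by nlinarith
  set P : ℝ := 1 + (2 * (d : ℝ) - 1) * z ^ 2 with hPdef
  have hP : 0 < P := by nlinarith [sq_nonneg z]
  -- numerator bound : 2d|z| < P
  have hnum : 2 * (d : ℝ) * |z| < P := by
    nlinarith [mul_pos (sub_pos.mpr hz1) (sub_pos.mpr hzlt1), sq_abs z]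
  -- |Dhat| ≤ 1
  have hDabs : |Dhat k| ≤ 1 := by
    have hsum : |∑ j, Real.cos (k j)| ≤ (d : ℝ) := by
      calc |∑ j, Real.cos (k j)| ≤ ∑ j, |Real.cos (k j)| :=
            Finset.abs_sum_le_sum_abs _ _
        _ ≤ ∑ _j : Fin d, (1 : ℝ) := Finset.sum_le_sum (fun j _ => Real.abs_cos_le_one _)
        _ = (d : ℝ) := by simp
    rw [Dhat, abs_mul, abs_of_pos (by positivity : (0:ℝ) < 1 / (d : ℝ))]
    rw [div_mul_eq_mul_div, one_mul, div_le_one (by positivity : (0:ℝ) < (d:ℝ))]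
    linarith
  -- part 1
  set η : ℝ := 2 * (d : ℝ) * z / (1 + (2 * (d : ℝ) - 1) * z ^ 2) * Dhat k with hηdef
  have part1 : |η| < 1 := by
    rw [hηdef, abs_mul, abs_div, abs_of_pos hP]
    have h2dz : |2 * (d : ℝ) * z| = 2 * (d : ℝ) * |z| := by
      rw [abs_mul, abs_of_nonneg (by linarith : (0:ℝ) ≤ 2 * (d : ℝ))]
    rw [h2dz]
    calc 2 * (d : ℝ) * |z| / P * |Dhat k| ≤ 2 * (d : ℝ) * |z| / P * 1 := by
          apply mul_le_mul_of_nonneg_left hDabs (by positivity)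
      _ < 1 := by rw [mul_one, div_lt_one hP]; exact hnum
  refine ⟨part1, ?_⟩
  -- the sum
  set c : ℂ := ∑ ι, phase k ι with hc
  set f : ℕ → ℂ := fun n => aseq d k n * (z : ℂ) ^ n with hf
  have hr0 : (0 : ℝ) ≤ (2 * (d : ℝ) - 1) * |z| := by positivity
  have hfb : ∀ n, ‖f n‖ ≤ 2 * (d : ℝ) * ((2 * (d : ℝ) - 1) * |z|) ^ n := by
    intro n
    rw [hf]
    calc ‖aseq d k n * (z : ℂ) ^ n‖ = ‖aseq d k n‖ * |z| ^ n := by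
          rw [norm_mul, norm_pow, Complex.norm_real, Real.norm_eq_abs]
      _ ≤ 2 * (d : ℝ) * (2 * (d : ℝ) - 1) ^ n * |z| ^ n := by
          apply mul_le_mul_of_nonneg_right (aseq_bound k hd1 n) (by positivity)
      _ = 2 * (d : ℝ) * ((2 * (d : ℝ) - 1) * |z|) ^ n := by rw [mul_pow]; ring
  have hsummable : Summable f := by
    apply Summable.of_norm_bounded (Summable.mul_left (2 * (d : ℝ))
      (summable_geometric_of_lt_one hr0 hz1)) hfb
  set S : ℂ := ∑' n, f n with hSdef
  have hS : HasSum f S := hsummable.hasSum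
  have h0 : f 0 = 1 := by rw [hf]; simp [aseq_zero]
  have h1 : f 1 = c * z := by rw [hf]; simp [aseq_one, hc]
  have h2 : f 2 = (c * c - 2 * (d : ℂ)) * (z : ℂ) ^ 2 := by
    rw [hf]
    show aseq d k 2 * (z : ℂ) ^ 2 = _
    rw [aseq_two, aseq_one, ← hc]
  have hsh1 : HasSum (fun n => f (n + 1)) (S - f 0) := by
    have e : S = (S - f 0) + ∑ i ∈ Finset.range 1, f i := by
      rw [Finset.sum_range_one]; ring
    exact (hasSum_nat_add_iff 1).mpr (e ▸ hS)
  have hsh2 : HasSum (fun n => f (n + 2)) (S - (f 0 + f 1)) := by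
    have e : S = (S - (f 0 + f 1)) + ∑ i ∈ Finset.range 2, f i := by
      rw [Finset.sum_range_succ, Finset.sum_range_one]; ring
    exact (hasSum_nat_add_iff 2).mpr (e ▸ hS)
  have hsh3 : HasSum (fun n => f (n + 3)) (S - (f 0 + f 1 + f 2)) := by
    have e : S = (S - (f 0 + f 1 + f 2)) + ∑ i ∈ Finset.range 3, f i := by
      rw [Finset.sum_range_succ, Finset.sum_range_succ, Finset.sum_range_one]; ring
    exact (hasSum_nat_add_iff 3).mpr (e ▸ hS)
  have hrec : (fun n => f (n + 3))
      = fun n => c * z * f (n + 2) - (2 * (d : ℂ) - 1) * (z : ℂ) ^ 2 * f (n + 1) := by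
    funext n
    show aseq d k (n + 3) * (z : ℂ) ^ (n + 3)
      = c * z * (aseq d k (n + 2) * (z : ℂ) ^ (n + 2))
        - (2 * (d : ℂ) - 1) * (z : ℂ) ^ 2 * (aseq d k (n + 1) * (z : ℂ) ^ (n + 1))
    rw [aseq_rec k n, ← hc]
    ring
  have hku : HasSum (fun n => f (n + 3))
      (c * z * (S - (f 0 + f 1)) - (2 * (d : ℂ) - 1) * (z : ℂ) ^ 2 * (S - f 0)) := by
    rw [hrec]
    exact (hsh2.mul_left (c * z)).sub (hsh1.mul_left ((2 * (d : ℂ) - 1) * (z : ℂ) ^ 2))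
  have hstar := hsh3.unique hku
  rw [h0, h1, h2] at hstar
  have key : (1 - c * z + (2 * (d : ℂ) - 1) * (z : ℂ) ^ 2) * S = 1 - (z : ℂ) ^ 2 := by
    linear_combination hstar
  -- identify c with 2 d Dhat
  have hcos : (∑ j, Real.cos (k j)) = (d : ℝ) * Dhat k := by
    rw [Dhat]
    field_simp
  have hceq : c = ((2 * (d : ℝ) * Dhat k : ℝ) : ℂ) := by
    rw [hc, sum_phase k, hcos]
    push_cast
    ring
  have hfact : 1 - 2 * (d : ℝ) * Dhat k * z + (2 * (d : ℝ) - 1) * z ^ 2 = P * (1 - η) := by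
    rw [hηdef, hPdef]
    field_simp
    ring
  have key2 : ((P : ℝ) : ℂ) * ((1 - η : ℝ) : ℂ) * S = 1 - (z : ℂ) ^ 2 := by
    have hBc : (1 - c * z + (2 * (d : ℂ) - 1) * (z : ℂ) ^ 2)
        = ((P : ℝ) : ℂ) * ((1 - η : ℝ) : ℂ) := by
      rw [hceq]
      rw [show ((P : ℝ) : ℂ) * ((1 - η : ℝ) : ℂ) = ((P * (1 - η) : ℝ) : ℂ) by push_cast; ring]
      rw [← hfact]
      push_cast
      ring
    rw [← hBc]
    exact key
  have h1mη : (0 : ℝ) < 1 - η := by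
    have := abs_lt.mp part1
    linarith [this.2]
  have hPc : ((P : ℝ) : ℂ) ≠ 0 := by
    exact_mod_cast ne_of_gt hP
  have hηc : ((1 - η : ℝ) : ℂ) ≠ 0 := by
    exact_mod_cast ne_of_gt h1mη
  have hPne : P ≠ 0 := ne_of_gt hP
  have hηR : (1 : ℝ) - η ≠ 0 := ne_of_gt h1mη
  have hSval : S = ((((1 - z ^ 2) / P) : ℝ) : ℂ) * (1 / (1 - ((η : ℝ) : ℂ))) := by
    have step1 : S = ((((1 - z ^ 2) / (P * (1 - η))) : ℝ) : ℂ) := by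
      rw [Complex.ofReal_div, eq_div_iff (by
        exact_mod_cast mul_ne_zero hPne hηR : ((P * (1 - η) : ℝ) : ℂ) ≠ 0)]
      rw [show ((P * (1 - η) : ℝ) : ℂ) = ((P : ℝ) : ℂ) * ((1 - η : ℝ) : ℂ) by push_cast; ring]
      rw [show ((1 - z ^ 2 : ℝ) : ℂ) = 1 - (z : ℂ) ^ 2 by push_cast; ring]
      linear_combination key2
    have hreal : (1 - z ^ 2) / (P * (1 - η)) = (1 - z ^ 2) / P * (1 / (1 - η)) := by
      rw [div_mul_div_comm, mul_one]
    rw [step1, hreal]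
    push_cast
    ring
  have hfun : (fun n : ℕ => bhat d n k * (z : ℂ) ^ n) = f := by
    funext n
    rw [bhat_eq k n]
  rw [hfun]
  have : ((((1 - z ^ 2) / P) : ℝ) : ℂ) * (1 / (1 - ((η : ℝ) : ℂ)))
      = (((1 - z ^ 2) / (1 + (2 * (d : ℝ) - 1) * z ^ 2) : ℝ) *
        (1 / (1 - ((2 * (d : ℝ) * z / (1 + (2 * (d : ℝ) - 1) * z ^ 2)) * Dhat k : ℝ)))) := by
    rw [hPdef, hηdef]
  rw [← this, ← hSval]
  exact hS

end
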